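/- Let W be the Weyl group of type C_n acting on the Laurent polynomial ring ℂ[t_1^{±1}, ..., t_n^{±1}] by permuting the variables and inverting variables (t_i ↦ t_i^{-1}). A W-invariant Laurent polynomial f lies in the ℂ-subalgebra generated by the elements t̄_i = (t_i - t_i^{-1})/2 for i = 1,...,n if and only if there exists a symmetric polynomial P with f = P(t̄_1^2, ..., t̄_n^2). -/

import Mathlib

open MvPolynomial

/-- The element `t̄_i = (t_i - t_i⁻¹)/2` of the Laurent polynomial ring
`ℂ[t_1^{±1},…,t_n^{±1}]`, modelled as the group algebra `ℂ[ℤ^n]`. -/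
noncomputable def tbar (n : ℕ) (i : Fin n) : AddMonoidAlgebra ℂ (Fin n →₀ ℤ) :=
  (2 : ℂ)⁻¹ • (AddMonoidAlgebra.single (Finsupp.single i 1) 1 -
    AddMonoidAlgebra.single (Finsupp.single i (-1)) 1)

namespace Stmt10
variable {n : ℕ}

/-- The multiplicative character `m ↦ ∏ c i ^ m i`. -/
noncomputable def expHom (c : Fin n → ℂˣ) : Multiplicative (Fin n →₀ ℤ) →* ℂ where
  toFun m := ((∏ i, c i ^ (Multiplicative.toAdd m) i : ℂˣ) : ℂ)
  map_one' := by simp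
  map_mul' x y := by
    push_cast
    rw [← Finset.prod_mul_distrib]
    exact Finset.prod_congr rfl fun i _ => zpow_add₀ (Units.ne_zero _) _ _

noncomputable def E (c : Fin n → ℂˣ) : AddMonoidAlgebra ℂ (Fin n →₀ ℤ) →ₐ[ℂ] ℂ :=
  AddMonoidAlgebra.lift ℂ ℂ (Fin n →₀ ℤ) (expHom c)

lemma E_single (c : Fin n → ℂˣ) (m : Fin n →₀ ℤ) (a : ℂ) :
    E c (AddMonoidAlgebra.single m a) = a * ((∏ i, c i ^ m i : ℂˣ) : ℂ) := by
  rw [E, AddMonoidAlgebra.lift_single]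
  rfl

lemma E_tbar (c : Fin n → ℂˣ) (i : Fin n) :
    E c (tbar n i) = ((c i : ℂ) - (c i : ℂ)⁻¹) / 2 := by
  have h : ∀ k : ℤ, ((∏ j, c j ^ (Finsupp.single i k) j : ℂˣ) : ℂ) = ((c i ^ k : ℂˣ) : ℂ) := by
    intro k
    congr 1
    rw [Fintype.prod_eq_single i (fun j hj => by
      rw [Finsupp.single_apply, if_neg fun h => hj h.symm, zpow_zero]),
      Finsupp.single_eq_same]
  rw [tbar, map_smul, map_sub, E_single, E_single, h, h]
  push_cast
  rw [zpow_one, zpow_neg_one]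
  push_cast
  rw [smul_eq_mul]
  ring

lemma exists_unit (a : ℂ) : ∃ c : ℂˣ, ((c : ℂ) - (c : ℂ)⁻¹) / 2 = a := by
  obtain ⟨b, hb⟩ := IsAlgClosed.exists_pow_nat_eq (k := ℂ) (a ^ 2 + 1) zero_lt_two
  have hz : a + b ≠ 0 := by
    intro h
    have hb' : b = -a := by linear_combination h
    rw [hb'] at hb
    have : (1 : ℂ) = 0 := by linear_combination -hb
    simp at this
  refine ⟨Units.mk0 (a + b) hz, ?_⟩
  rw [Units.val_mk0]
  field_simp
  linear_combination hb

lemma aeval_eq_eval (x : Fin n → ℂ) (Q : MvPolynomial (Fin n) ℂ) :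
    aeval x Q = eval x Q := by
  rw [aeval_def, eval, Algebra.algebraMap_self]
  rfl

lemma inj_phi : Function.Injective (aeval (tbar n) : MvPolynomial (Fin n) ℂ →ₐ[ℂ] _) := by
  rw [injective_iff_map_eq_zero]
  intro Q hQ
  apply MvPolynomial.funext (q := 0)
  intro x
  choose c hc using fun i => exists_unit (x i)
  have h1 : (E c).comp (aeval (tbar n)) = aeval fun i => E c (tbar n i) := comp_aeval _ (E c)
  have h2 := congrArg (E c) hQ
  rw [← AlgHom.comp_apply, h1, map_zero] at h2
  simp only [E_tbar, hc] at h2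
  rw [aeval_eq_eval] at h2
  rw [h2, map_zero]

lemma inj_psi :
    Function.Injective (aeval (fun i => tbar n i ^ 2) : MvPolynomial (Fin n) ℂ →ₐ[ℂ] _) := by
  rw [injective_iff_map_eq_zero]
  intro Q hQ
  apply MvPolynomial.funext (q := 0)
  intro x
  choose b hb using fun i => IsAlgClosed.exists_pow_nat_eq (k := ℂ) (x i) zero_lt_two
  choose c hc using fun i => exists_unit (b i)
  have h1 : (E c).comp (aeval fun i => tbar n i ^ 2) =
      aeval fun i => E c (tbar n i ^ 2) := comp_aeval _ (E c)
  have h2 := congrArg (E c) hQ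
  rw [← AlgHom.comp_apply, h1, map_zero] at h2
  simp only [map_pow, E_tbar, hc, hb] at h2
  rw [aeval_eq_eval] at h2
  rw [h2, map_zero]

lemma units_sq (u : ℤˣ) : ((u : ℤ)) * ((u : ℤ)) = 1 := by
  rw [← Units.val_mul, Int.units_mul_self, Units.val_one]

/-- The additive automorphism of `Fin n →₀ ℤ` given by `(σ, ε) ∈ W`. -/
noncomputable def Tfun (σ : Equiv.Perm (Fin n)) (ε : Fin n → ℤˣ) :
    (Fin n → ℤ) ≃+ (Fin n → ℤ) where
  toFun m := fun i => (ε i : ℤ) * m (σ⁻¹ i)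
  invFun m := fun i => (ε (σ i) : ℤ) * m (σ i)
  left_inv m := by
    funext i
    simp only [Equiv.Perm.inv_def, Equiv.symm_apply_apply, ← mul_assoc, units_sq, one_mul]
  right_inv m := by
    funext i
    simp only [Equiv.Perm.inv_def, Equiv.apply_symm_apply, ← mul_assoc, units_sq, one_mul]
  map_add' x y := by
    funext i
    simp [mul_add]

noncomputable def Tequiv (σ : Equiv.Perm (Fin n)) (ε : Fin n → ℤˣ) :
    (Fin n →₀ ℤ) ≃+ (Fin n →₀ ℤ) :=
  Finsupp.addEquivFunOnFinite.trans ((Tfun σ ε).trans Finsupp.addEquivFunOnFinite.symm)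

lemma Tequiv_apply (σ : Equiv.Perm (Fin n)) (ε : Fin n → ℤˣ) (m : Fin n →₀ ℤ) :
    Tequiv σ ε m = Finsupp.equivFunOnFinite.symm (fun i => (ε i : ℤ) * m (σ⁻¹ i)) := rfl

lemma Tequiv_symm_apply (σ : Equiv.Perm (Fin n)) (ε : Fin n → ℤˣ) (m : Fin n →₀ ℤ) :
    (Tequiv σ ε).symm m = Finsupp.equivFunOnFinite.symm (fun i => (ε (σ i) : ℤ) * m (σ i)) := rfl

noncomputable def Phi (σ : Equiv.Perm (Fin n)) (ε : Fin n → ℤˣ) :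
    AddMonoidAlgebra ℂ (Fin n →₀ ℤ) ≃ₐ[ℂ] AddMonoidAlgebra ℂ (Fin n →₀ ℤ) :=
  AddMonoidAlgebra.domCongr ℂ ℂ (Tequiv σ ε)

lemma Tequiv_single (σ : Equiv.Perm (Fin n)) (ε : Fin n → ℤˣ) (i : Fin n) (k : ℤ) :
    Tequiv σ ε (Finsupp.single i k) = Finsupp.single (σ i) ((ε (σ i) : ℤ) * k) := by
  ext j
  rw [Tequiv_apply]
  simp only [Finsupp.equivFunOnFinite_symm_apply_apply, Finsupp.single_apply]
  by_cases h : j = σ i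
  · subst h
    rw [if_pos (show σ⁻¹ (σ i) = i from Equiv.Perm.inv_eq_iff_eq.mpr rfl).symm, if_pos rfl]
  · have h1 : ¬ i = σ⁻¹ j := by
      intro hh
      apply h
      rw [hh, show σ (σ⁻¹ j) = j from (Equiv.eq_symm_apply σ).mp rfl]
    have h2 : ¬ σ i = j := fun hh => h hh.symm
    rw [if_neg h1, if_neg h2, mul_zero]

lemma Phi_tbar (σ : Equiv.Perm (Fin n)) (ε : Fin n → ℤˣ) (i : Fin n) :
    Phi σ ε (tbar n i) = ((ε (σ i) : ℤ) : ℂ) • tbar n (σ i) := by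
  rw [tbar, map_smul, map_sub, Phi, AddMonoidAlgebra.domCongr_single,
    AddMonoidAlgebra.domCongr_single, Tequiv_single, Tequiv_single]
  rcases Int.units_eq_one_or (ε (σ i)) with h | h <;> rw [h] <;> push_cast <;>
    simp only [tbar, one_mul, one_smul, neg_mul, neg_neg, neg_smul, smul_sub, smul_smul,
      neg_sub, mul_one, Finsupp.single_neg] <;> abel

lemma Phi_fixed (f : AddMonoidAlgebra ℂ (Fin n →₀ ℤ))
    (hinv : ∀ (σ : Equiv.Perm (Fin n)) (ε : Fin n → ℤˣ) (m : Fin n →₀ ℤ),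
      f.coeff (Finsupp.equivFunOnFinite.symm fun i => (ε i : ℤ) * m (σ⁻¹ i)) = f.coeff m)
    (σ : Equiv.Perm (Fin n)) (ε : Fin n → ℤˣ) : Phi σ ε f = f := by
  ext m
  rw [Phi, AddMonoidAlgebra.coeff_domCongr, Tequiv_symm_apply]
  have := hinv σ⁻¹ (fun i => ε (σ i)) m
  rw [inv_inv] at this
  exact this

noncomputable def gHom (σ : Equiv.Perm (Fin n)) (ε : Fin n → ℤˣ) :
    MvPolynomial (Fin n) ℂ →ₐ[ℂ] MvPolynomial (Fin n) ℂ :=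
  aeval fun i => ((ε (σ i) : ℤ) : ℂ) • X (σ i)

lemma equivariance (σ : Equiv.Perm (Fin n)) (ε : Fin n → ℤˣ) (Q : MvPolynomial (Fin n) ℂ) :
    aeval (tbar n) (gHom σ ε Q) = Phi σ ε (aeval (tbar n) Q) := by
  have h1 : (aeval (tbar n)).comp (gHom σ ε) =
      (Phi σ ε).toAlgHom.comp (aeval (tbar n)) := by
    apply MvPolynomial.algHom_ext
    intro i
    show aeval (tbar n) (gHom σ ε (X i)) = Phi σ ε (aeval (tbar n) (X i))
    rw [gHom, aeval_X, map_smul, aeval_X, aeval_X, Phi_tbar]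
  calc aeval (tbar n) (gHom σ ε Q)
      = ((aeval (tbar n)).comp (gHom σ ε)) Q := rfl
    _ = Phi σ ε (aeval (tbar n) Q) := by rw [h1]; rfl

lemma Q_invariant (f : AddMonoidAlgebra ℂ (Fin n →₀ ℤ))
    (hinv : ∀ (σ : Equiv.Perm (Fin n)) (ε : Fin n → ℤˣ) (m : Fin n →₀ ℤ),
      f.coeff (Finsupp.equivFunOnFinite.symm fun i => (ε i : ℤ) * m (σ⁻¹ i)) = f.coeff m)
    (Q : MvPolynomial (Fin n) ℂ) (hQ : aeval (tbar n) Q = f)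
    (σ : Equiv.Perm (Fin n)) (ε : Fin n → ℤˣ) :
    gHom σ ε Q = Q := by
  apply inj_phi
  rw [equivariance, hQ, Phi_fixed f hinv]

lemma aeval_diag_monomial (c : Fin n → ℂ) (d : Fin n →₀ ℕ) (a : ℂ) :
    aeval (R := ℂ) (fun j => c j • X j) (monomial d a) =
      monomial d ((∏ j, c j ^ d j) * a) := by
  rw [aeval_monomial, monomial_eq]
  have h1 : (d.prod fun j k => (c j • X j : MvPolynomial (Fin n) ℂ) ^ k) =
      C (∏ j, c j ^ d j) * d.prod fun j k => (X j : MvPolynomial (Fin n) ℂ) ^ k := by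
    rw [Finsupp.prod, Finsupp.prod]
    have : ∀ j ∈ d.support, (c j • X j : MvPolynomial (Fin n) ℂ) ^ d j =
        C (c j ^ d j) * X j ^ d j := by
      intro j _
      rw [smul_pow, smul_eq_C_mul]
    rw [Finset.prod_congr rfl this, Finset.prod_mul_distrib, ← map_prod]
    congr 1
    exact congrArg C (Finsupp.prod_fintype d (fun j k => c j ^ k) fun j => pow_zero (c j))
  rw [h1, algebraMap_eq, map_mul]
  ring

lemma coeff_aeval_diag (c : Fin n → ℂ) (Q : MvPolynomial (Fin n) ℂ) (m : Fin n →₀ ℕ) :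
    coeff m (aeval (R := ℂ) (fun j => c j • X j) Q) = (∏ j, c j ^ m j) * coeff m Q := by
  conv_lhs => rw [Q.as_sum]
  rw [map_sum]
  simp only [aeval_diag_monomial]
  rw [coeff_sum]
  simp only [coeff_monomial]
  rw [Finset.sum_ite_eq' Q.support m fun d => (∏ j, c j ^ d j) * coeff d Q]
  by_cases h : m ∈ Q.support
  · rw [if_pos h]
  · rw [if_neg h, notMem_support_iff.mp h, mul_zero]

lemma parity (Q : MvPolynomial (Fin n) ℂ)
    (h : ∀ ε : Fin n → ℤˣ, gHom 1 ε Q = Q) (m : Fin n →₀ ℕ) (hm : m ∈ Q.support)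
    (i : Fin n) : 2 ∣ m i := by
  set ε : Fin n → ℤˣ := fun j => if j = i then -1 else 1 with hε
  have h2 := congrArg (coeff m) (h ε)
  rw [gHom] at h2
  have h3 : (fun j => ((ε ((1 : Equiv.Perm (Fin n)) j) : ℤ) : ℂ) • X ((1 : Equiv.Perm (Fin n)) j))
      = fun j => ((ε j : ℤ) : ℂ) • (X j : MvPolynomial (Fin n) ℂ) := rfl
  rw [h3, coeff_aeval_diag] at h2
  have h4 : (∏ j, ((ε j : ℤ) : ℂ) ^ m j) = (-1 : ℂ) ^ m i := by
    rw [Fintype.prod_eq_single i (fun j hj => by simp [hε, hj])]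
    simp [hε]
  rw [h4] at h2
  have h5 : coeff m Q ≠ 0 := mem_support_iff.mp hm
  have h6 : ((-1 : ℂ) ^ m i - 1) * coeff m Q = 0 := by linear_combination h2
  rcases mul_eq_zero.mp h6 with h7 | h7
  · have : ((-1 : ℂ) ^ m i) = 1 := by linear_combination h7
    exact ((neg_one_pow_eq_one_iff_even (by norm_num : (-1 : ℂ) ≠ 1)).mp this).two_dvd
  · exact absurd h7 h5

/-- halve exponents -/
noncomputable def halve (m : Fin n →₀ ℕ) : Fin n →₀ ℕ :=
  Finsupp.mapRange (· / 2) (Nat.zero_div 2) m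

lemma two_smul_halve (m : Fin n →₀ ℕ) (h : ∀ i, 2 ∣ m i) : 2 • halve m = m := by
  ext i
  rw [Finsupp.smul_apply, halve, Finsupp.mapRange_apply, smul_eq_mul]
  exact Nat.mul_div_cancel' (h i)

noncomputable def sq2 : MvPolynomial (Fin n) ℂ →ₐ[ℂ] MvPolynomial (Fin n) ℂ :=
  bind₁ fun i => (X i : MvPolynomial (Fin n) ℂ) ^ 2

lemma sq2_monomial (d : Fin n →₀ ℕ) (a : ℂ) :
    sq2 (monomial d a) = monomial (2 • d) a := by
  rw [sq2, bind₁_monomial, monomial_eq]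
  congr 1
  rw [Finsupp.prod]
  have hsupp : (2 • d).support = d.support := by
    ext j
    simp [Finsupp.mem_support_iff]
  rw [hsupp]
  refine Finset.prod_congr rfl fun j _ => ?_
  rw [← pow_mul, Finsupp.smul_apply, smul_eq_mul]

lemma coeff_sq2 (d : Fin n →₀ ℕ) (P : MvPolynomial (Fin n) ℂ) :
    coeff (2 • d) (sq2 P) = coeff d P := by
  have hinj : ∀ e : Fin n →₀ ℕ, 2 • e = 2 • d ↔ e = d := by
    intro e
    constructor
    · intro h
      ext i
      have := congrArg (fun g : Fin n →₀ ℕ => g i) h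
      simp only [Finsupp.smul_apply, smul_eq_mul] at this
      omega
    · rintro rfl; rfl
  conv_lhs => rw [P.as_sum]
  rw [map_sum, coeff_sum]
  simp only [sq2_monomial, coeff_monomial]
  have : ∀ e ∈ P.support, (if 2 • e = 2 • d then coeff e P else 0)
      = if e = d then coeff e P else 0 := by
    intro e _
    exact if_congr (hinj e) rfl rfl
  rw [Finset.sum_congr rfl this, Finset.sum_ite_eq' P.support d fun e => coeff e P]
  by_cases h : d ∈ P.support
  · rw [if_pos h]
  · rw [if_neg h, notMem_support_iff.mp h]

lemma sq2_injective : Function.Injective (sq2 (n := n)) := by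
  intro P P' h
  ext d
  rw [← coeff_sq2 d P, h, coeff_sq2]

lemma gHom_perm (σ : Equiv.Perm (Fin n)) :
    gHom σ 1 = (rename σ : MvPolynomial (Fin n) ℂ →ₐ[ℂ] MvPolynomial (Fin n) ℂ) := by
  apply MvPolynomial.algHom_ext
  intro i
  rw [gHom, aeval_X, rename_X]
  simp

lemma sq2_rename (σ : Equiv.Perm (Fin n)) (P : MvPolynomial (Fin n) ℂ) :
    sq2 (rename σ P) = rename σ (sq2 P) := by
  rw [sq2, bind₁_rename, rename_bind₁]
  have : ((fun i => (X i : MvPolynomial (Fin n) ℂ) ^ 2) ∘ σ)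
      = fun i => rename σ ((X i : MvPolynomial (Fin n) ℂ) ^ 2) := by
    funext i
    simp
  rw [this]

lemma aeval_sq2 (P : MvPolynomial (Fin n) ℂ) :
    aeval (fun i => tbar n i ^ 2) P = aeval (tbar n) (sq2 P) := by
  rw [sq2, aeval_bind₁]
  refine congrFun (congrArg _ (congrArg _ (funext fun i => ?_))) P
  rw [map_pow, aeval_X]

lemma main_forward (f : AddMonoidAlgebra ℂ (Fin n →₀ ℤ))
    (hinv : ∀ (σ : Equiv.Perm (Fin n)) (ε : Fin n → ℤˣ) (m : Fin n →₀ ℤ),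
      f.coeff (Finsupp.equivFunOnFinite.symm fun i => (ε i : ℤ) * m (σ⁻¹ i)) = f.coeff m)
    (Q : MvPolynomial (Fin n) ℂ) (hQ : aeval (tbar n) Q = f) :
    ∃ P : MvPolynomial (Fin n) ℂ, P.IsSymmetric ∧
      MvPolynomial.aeval (fun i => tbar n i ^ 2) P = f := by
  -- parity of the support of Q
  have hpar : ∀ m ∈ Q.support, ∀ i, 2 ∣ m i :=
    fun m hm i => parity Q (fun ε => Q_invariant f hinv Q hQ 1 ε) m hm i
  -- the polynomial P with Q = P(X²)
  set P : MvPolynomial (Fin n) ℂ :=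
    ∑ m ∈ Q.support, monomial (halve m) (coeff m Q) with hP
  have hsP : sq2 P = Q := by
    rw [hP, map_sum]
    conv_rhs => rw [Q.as_sum]
    refine Finset.sum_congr rfl fun m hm => ?_
    rw [sq2_monomial, two_smul_halve m (hpar m hm)]
  refine ⟨P, ?_, ?_⟩
  · intro σ
    apply sq2_injective
    rw [sq2_rename, hsP]
    have := Q_invariant f hinv Q hQ σ 1
    rw [gHom_perm] at this
    exact this
  · rw [aeval_sq2, hsP, hQ]

end Stmt10

/-- a Laurent polynomial `f` invariant under the type `C_n` Weyl group
`W = S_n ⋉ (ℤ/2)^n` (acting by permuting the variables and inverting variables; invariance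
is expressed on coefficients: the coefficient of `f` at an exponent vector `m` equals its
coefficient at the transformed exponent vector) lies in the `ℂ`-subalgebra generated by
`t̄_1, …, t̄_n` if and only if `f = P(t̄_1^2, …, t̄_n^2)` for some symmetric polynomial `P`. -/
theorem stmt10 (n : ℕ) (f : AddMonoidAlgebra ℂ (Fin n →₀ ℤ))
    (hinv : ∀ (σ : Equiv.Perm (Fin n)) (ε : Fin n → ℤˣ) (m : Fin n →₀ ℤ),
      f.coeff (Finsupp.equivFunOnFinite.symm fun i => (ε i : ℤ) * m (σ⁻¹ i)) = f.coeff m) :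
    f ∈ Algebra.adjoin ℂ (Set.range (tbar n)) ↔
      ∃ P : MvPolynomial (Fin n) ℂ, P.IsSymmetric ∧
        MvPolynomial.aeval (fun i => tbar n i ^ 2) P = f := by
  constructor
  · intro h
    rw [Algebra.adjoin_range_eq_range_aeval] at h
    obtain ⟨Q, hQ⟩ := h
    exact Stmt10.main_forward f hinv Q hQ
  · rintro ⟨P, -, rfl⟩
    rw [Algebra.adjoin_range_eq_range_aeval]
    exact ⟨Stmt10.sq2 P, (Stmt10.aeval_sq2 P).symm⟩
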